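/- Let n ≥ 1. Let H^{11} ∈ M_n(ℝ) be symmetric positive definite with nonpositive off-diagonal entries, let H^{12} ∈ M_{n,2}(ℝ) have only nonpositive entries, and let H̄^{12} := H^{12}·(1,1)ᵀ ∈ M_{n,1}(ℝ). Let H ∈ M_{n+2}(ℝ) and H̄ ∈ M_{n+1}(ℝ) be symmetric positive definite matrices with nonpositive off-diagonal entries admitting the block decompositions H = [[H^{11}, H^{12}],[(H^{12})ᵀ, H^{22}]] and H̄ = [[H^{11}, H̄^{12}],[(H̄^{12})ᵀ, H̄^{22}]]. Let G := H^{-1} and Ḡ := H̄^{-1}, let G^{22} ∈ M_2(ℝ) be the lower-right 2×2 block of G and Ḡ^{22} ∈ ℝ the lower-right entry of Ḡ. Set M := −(H^{12})ᵀ(H^{11})^{-1} ∈ M_{2,n}(ℝ). For X ∈ ℝ^{n+2} write X^{(1)} ∈ ℝ^n for its first n coordinates and X^{(2)} ∈ ℝ² for its last two coordinates, define α(X) := M X^{(1)} + X^{(2)} ∈ ℝ², and let X̄ ∈ ℝ^{n+1} be given by X̄_i = X_i for i ≤ n and X̄_{n+1} = X_{n+1} + X_{n+2}. Then for any X¹,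 X² ∈ [0,∞)^{n+2}: the entries of α(X¹) and α(X²) are nonnegative, the number C := (X^{1,(1)})ᵀ(H^{11})^{-1}X^{2,(1)} is nonnegative, and one has (X¹)ᵀ G X² = C + α(X¹)ᵀ G^{22} α(X²) and (X̄¹)ᵀ Ḡ X̄² = C + (α(X¹)₁ + α(X¹)₂) · Ḡ^{22} · (α(X²)₁ + α(X²)₂). -/

import Mathlib

open Matrix


lemma stieltjes_inv_nonneg {m : Type*} [Fintype m] [DecidableEq m]
    (A : Matrix m m ℝ) (hpd : A.PosDef) (hoff : ∀ i j, i ≠ j → A i j ≤ 0) :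
    ∀ i j, 0 ≤ A⁻¹ i j := by
  have hinv : A * A⁻¹ = 1 := mul_nonsing_inv A hpd.det_pos.ne'.isUnit
  intro i j
  set x : m → ℝ := fun i => A⁻¹ i j with hx
  have hAx : A *ᵥ x = fun i => if i = j then 1 else 0 := by
    funext i
    have : (A * A⁻¹) i j = (1 : Matrix m m ℝ) i j := by rw [hinv]
    simpa [mulVec, dotProduct, mul_apply, Matrix.one_apply, x] using this
  set u : m → ℝ := fun i => max (-(x i)) 0 with hu
  have hu0 : ∀ i, 0 ≤ u i := fun i => le_max_right _ _
  have hxu : ∀ i, 0 ≤ x i + u i := by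
    intro i
    rcases le_total (x i) 0 with h | h
    · simp [hu, max_eq_left (by linarith : (0:ℝ) ≤ -(x i))]
    · have : u i = 0 := max_eq_right (by linarith)
      simp [this]; linarith
  have huxu : ∀ i, u i * (x i + u i) = 0 := by
    intro i
    rcases le_total (x i) 0 with h | h
    · have : u i = -(x i) := max_eq_left (by linarith)
      rw [this]; ring
    · have : u i = 0 := max_eq_right (by linarith)
      simp [this]
  have key : u ⬝ᵥ (A *ᵥ (x + u)) ≤ 0 := by
    rw [dotProduct]
    apply Finset.sum_nonpos
    intro i _
    rw [mulVec, dotProduct, Finset.mul_sum]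
    apply Finset.sum_nonpos
    intro k _
    by_cases hik : i = k
    · subst hik
      have : u i * (A i i * (x + u) i) = A i i * (u i * (x i + u i)) := by
        simp [Pi.add_apply]; ring
      rw [this, huxu, mul_zero]
    · have h1 : A i k * (x + u) k ≤ 0 := mul_nonpos_of_nonpos_of_nonneg (hoff i k hik) (hxu k)
      exact mul_nonpos_of_nonneg_of_nonpos (hu0 i) h1
  have h1 : u ⬝ᵥ (A *ᵥ x) = u j := by
    rw [hAx]; simp [dotProduct]
  have h2 : u ⬝ᵥ (A *ᵥ (x + u)) = u j + u ⬝ᵥ (A *ᵥ u) := by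
    rw [mulVec_add, dotProduct_add, h1]
  have h3 : u ⬝ᵥ (A *ᵥ u) ≤ 0 := by
    have := hu0 j; linarith [key, h2.symm.le]
  have huzero : u = 0 := by
    by_contra h
    have := hpd.dotProduct_mulVec_pos h
    rw [star_trivial] at this
    linarith
  have := congrFun huzero i
  simp only [hu, Pi.zero_apply] at this
  have : -(x i) ≤ 0 := by
    by_contra h
    push_neg at h
    rw [max_eq_left h.le] at this
    linarith
  simpa [hx] using by linarith [this]


lemma posDef_submatrix {k l : Type*} [Fintype k] [DecidableEq k] [Fintype l] [DecidableEq l]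
    {M : Matrix k k ℝ} (hM : M.PosDef) (e : l ≃ k) : (M.submatrix e e).PosDef := by
  refine PosDef.of_dotProduct_mulVec_pos (hM.1.submatrix e) fun x hx => ?_
  have h1 : M.submatrix e e *ᵥ x = (M *ᵥ (x ∘ e.symm)) ∘ e := by
    simpa using submatrix_mulVec_equiv M x (e : l → k) e
  rw [star_trivial, h1]
  have h2 : x ⬝ᵥ ((M *ᵥ (x ∘ e.symm)) ∘ e) = (x ∘ e.symm) ⬝ᵥ (M *ᵥ (x ∘ e.symm)) := by
    rw [← dotProduct_comp_equiv_symm (e := e.symm)]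
    simp [Function.comp_def]
  rw [h2]
  have hx' : x ∘ e.symm ≠ 0 := by
    intro h; apply hx; funext i
    have := congrFun h (e i); simpa using this
  simpa [star_trivial] using hM.dotProduct_mulVec_pos hx'

lemma conjT_eq_transpose {k m : Type*} (B : Matrix k m ℝ) : Bᴴ = Bᵀ := by
  ext i j; simp [conjTranspose_apply]

lemma schur_posDef {k m : Type*} [Fintype k] [DecidableEq k] [Fintype m] [DecidableEq m]
    {A : Matrix k k ℝ} {B : Matrix k m ℝ} {D : Matrix m m ℝ}
    (hApd : A.PosDef) (hpd : (fromBlocks A B Bᵀ D).PosDef) :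
    (D - Bᵀ * A⁻¹ * B).PosDef := by
  letI := hApd.isUnit.invertible
  have hBt : Bᴴ = Bᵀ := conjT_eq_transpose B
  refine PosDef.of_dotProduct_mulVec_pos ?_ ?_
  · have := hpd.1
    rw [← hBt, IsHermitian.fromBlocks₁₁ _ _ hApd.1] at this
    rwa [hBt] at this
  · intro y hy
    have hxy : Sum.elim (-((A⁻¹ * B) *ᵥ y)) y ≠ 0 := by
      intro h; apply hy; funext a
      have := congrFun h (Sum.inr a); simpa using this
    have := hpd.dotProduct_mulVec_pos hxy
    rw [star_trivial, dotProduct_mulVec] at this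
    have hsc := schur_complement_eq₁₁ B D (-((A⁻¹ * B) *ᵥ y)) y hApd.1
    rw [hBt] at hsc
    rw [show (star (Sum.elim (-((A⁻¹ * B) *ᵥ y)) y)) = Sum.elim (-((A⁻¹ * B) *ᵥ y)) y from star_trivial _] at hsc
    rw [hsc] at this
    simpa [star_trivial, dotProduct_mulVec] using this


lemma blockInv {k m : Type*} [Fintype k] [DecidableEq k] [Fintype m] [DecidableEq m]
    (A : Matrix k k ℝ) (B : Matrix k m ℝ) (D : Matrix m m ℝ)
    (hApd : A.PosDef) (hS : (D - Bᵀ * A⁻¹ * B).PosDef) :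
    (fromBlocks A B Bᵀ D)⁻¹ =
      fromBlocks (A⁻¹ + A⁻¹ * B * (D - Bᵀ * A⁻¹ * B)⁻¹ * Bᵀ * A⁻¹)
        (-(A⁻¹ * B * (D - Bᵀ * A⁻¹ * B)⁻¹))
        (-((D - Bᵀ * A⁻¹ * B)⁻¹ * Bᵀ * A⁻¹)) ((D - Bᵀ * A⁻¹ * B)⁻¹) := by
  letI iA := hApd.isUnit.invertible
  have hiA : ⅟A = A⁻¹ := invOf_eq_nonsing_inv A
  letI iS : Invertible (D - Bᵀ * ⅟A * B) := by rw [hiA]; exact hS.isUnit.invertible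
  have hiS : (D - Bᵀ * ⅟A * B) = (D - Bᵀ * A⁻¹ * B) := by rw [hiA]
  letI iF := fromBlocks₁₁Invertible A B Bᵀ D
  have := invOf_fromBlocks₁₁_eq A B Bᵀ D
  rw [← invOf_eq_nonsing_inv (fromBlocks A B Bᵀ D), this]
  simp only [hiA, invOf_eq_nonsing_inv, hiS, Matrix.mul_assoc]

lemma blockQuad {k m : Type*} [Fintype k] [DecidableEq k] [Fintype m] [DecidableEq m]
    (A : Matrix k k ℝ) (B : Matrix k m ℝ) (D : Matrix m m ℝ) (hA : A.IsSymm)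
    (hApd : A.PosDef) (hS : (D - Bᵀ * A⁻¹ * B).PosDef)
    (x1 x2 : k → ℝ) (y1 y2 : m → ℝ) :
    Sum.elim x1 y1 ⬝ᵥ ((fromBlocks A B Bᵀ D)⁻¹ *ᵥ Sum.elim x2 y2) =
      x1 ⬝ᵥ (A⁻¹ *ᵥ x2) +
        ((-(Bᵀ * A⁻¹)) *ᵥ x1 + y1) ⬝ᵥ
          ((D - Bᵀ * A⁻¹ * B)⁻¹ *ᵥ ((-(Bᵀ * A⁻¹)) *ᵥ x2 + y2)) := by
  have hAinv : A⁻¹ᵀ = A⁻¹ := by rw [transpose_nonsing_inv, hA.eq]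
  have hmv : ∀ (v : k → ℝ) (r : k → ℝ), (A⁻¹ *ᵥ v) ⬝ᵥ r = v ⬝ᵥ (A⁻¹ *ᵥ r) := by
    intro v r
    conv_lhs => rw [← hAinv, mulVec_transpose]
    rw [← dotProduct_mulVec]
  have key0 : ∀ (v : k → ℝ) (r : m → ℝ), ((Bᵀ * A⁻¹) *ᵥ v) ⬝ᵥ r = v ⬝ᵥ ((A⁻¹ * B) *ᵥ r) := by
    intro v r
    rw [← mulVec_mulVec, mulVec_transpose, ← dotProduct_mulVec, hmv, mulVec_mulVec]
  rw [blockInv A B D hApd hS]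
  set S := (D - Bᵀ * A⁻¹ * B)⁻¹ with hSdef
  rw [fromBlocks_mulVec, sumElim_dotProduct_sumElim]
  simp only [Matrix.neg_mulVec, mulVec_add, mulVec_neg, dotProduct_add, add_dotProduct,
    dotProduct_neg, neg_dotProduct, Matrix.add_mulVec, mulVec_mulVec, neg_neg]
  simp only [Sum.elim_comp_inl, Sum.elim_comp_inr, key0]
  simp only [mulVec_mulVec, Matrix.mul_assoc]
  ring


/-- block reduction of the quadratic forms `(X¹)ᵀ G X²` and
`(X̄¹)ᵀ Ḡ X̄²` to the lower-right blocks `G²²` and `Ḡ²²`. -/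
theorem stmt3 {n : ℕ} (hn : 1 ≤ n)
    (H11 : Matrix (Fin n) (Fin n) ℝ) (hH11symm : H11.IsSymm) (hH11pd : H11.PosDef)
    (hH11off : ∀ i j : Fin n, i ≠ j → H11 i j ≤ 0)
    (H12 : Matrix (Fin n) (Fin 2) ℝ) (hH12 : ∀ i j, H12 i j ≤ 0)
    (H22 : Matrix (Fin 2) (Fin 2) ℝ) (H22bar : ℝ)
    -- H = [[H¹¹, H¹²],[(H¹²)ᵀ, H²²]], H̄ = [[H¹¹, H̄¹²],[(H̄¹²)ᵀ, H̄²²]]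
    (H : Matrix (Fin (n + 2)) (Fin (n + 2)) ℝ)
    (Hbar : Matrix (Fin (n + 1)) (Fin (n + 1)) ℝ)
    (hH : H = Matrix.reindex finSumFinEquiv finSumFinEquiv
      (Matrix.fromBlocks H11 H12 H12ᵀ H22))
    (hHbar : Hbar = Matrix.reindex finSumFinEquiv finSumFinEquiv
      (Matrix.fromBlocks H11 (Matrix.of fun i (_ : Fin 1) => H12 i 0 + H12 i 1)
        (Matrix.of fun (_ : Fin 1) j => H12 j 0 + H12 j 1) (Matrix.of fun _ _ => H22bar)))
    (hHsymm : H.IsSymm) (hHpd : H.PosDef)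
    (hHoff : ∀ i j : Fin (n + 2), i ≠ j → H i j ≤ 0)
    (hHbarsymm : Hbar.IsSymm) (hHbarpd : Hbar.PosDef)
    (hHbaroff : ∀ i j : Fin (n + 1), i ≠ j → Hbar i j ≤ 0)
    (X1 X2 : Fin (n + 2) → ℝ) (hX1 : ∀ i, 0 ≤ X1 i) (hX2 : ∀ i, 0 ≤ X2 i) :
    -- abbreviations
    (let G := H⁻¹
     let Gbar := Hbar⁻¹
     let M : Matrix (Fin 2) (Fin n) ℝ := -(H12ᵀ * H11⁻¹)
     let fst : (Fin (n + 2) → ℝ) → Fin n → ℝ :=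
       fun X k => X (finSumFinEquiv (Sum.inl k))
     let snd : (Fin (n + 2) → ℝ) → Fin 2 → ℝ :=
       fun X a => X (finSumFinEquiv (Sum.inr a))
     let α : (Fin (n + 2) → ℝ) → Fin 2 → ℝ := fun X => M *ᵥ fst X + snd X
     let barVec : (Fin (n + 2) → ℝ) → Fin (n + 1) → ℝ := fun X i =>
       if hi : (i : ℕ) < n then X ⟨i, by omega⟩
       else X ⟨n, by omega⟩ + X ⟨n + 1, by omega⟩
     let G22 : Matrix (Fin 2) (Fin 2) ℝ :=
       fun a b => G (finSumFinEquiv (Sum.inr a)) (finSumFinEquiv (Sum.inr b))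
     let Gbar22 : ℝ := Gbar (Fin.last n) (Fin.last n)
     let C : ℝ := fst X1 ⬝ᵥ (H11⁻¹ *ᵥ fst X2)
     (∀ a : Fin 2, 0 ≤ α X1 a) ∧ (∀ a : Fin 2, 0 ≤ α X2 a) ∧ 0 ≤ C ∧
     X1 ⬝ᵥ (G *ᵥ X2) = C + α X1 ⬝ᵥ (G22 *ᵥ α X2) ∧
     barVec X1 ⬝ᵥ (Gbar *ᵥ barVec X2) =
       C + (α X1 0 + α X1 1) * Gbar22 * (α X2 0 + α X2 1)) := by
  
  classical
  have hAinvnn : ∀ i j, 0 ≤ H11⁻¹ i j := stieltjes_inv_nonneg H11 hH11pd hH11off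
  have halpha : ∀ (X : Fin (n+2) → ℝ), (∀ i, 0 ≤ X i) → ∀ a : Fin 2,
      0 ≤ ((-(H12ᵀ * H11⁻¹)) *ᵥ (fun k => X (finSumFinEquiv (Sum.inl k)))
          + fun b => X (finSumFinEquiv (Sum.inr b))) a := by
    intro X hX a
    have h1 : 0 ≤ ((-(H12ᵀ * H11⁻¹)) *ᵥ (fun k => X (finSumFinEquiv (Sum.inl k)))) a := by
      rw [mulVec, dotProduct]
      apply Finset.sum_nonneg
      intro k _
      apply mul_nonneg _ (hX _)
      simp only [Matrix.neg_apply, mul_apply, transpose_apply]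
      rw [← Finset.sum_neg_distrib]
      apply Finset.sum_nonneg
      intro j _
      have := mul_nonpos_of_nonpos_of_nonneg (hH12 j a) (hAinvnn j k)
      linarith
    have h2 : 0 ≤ X (finSumFinEquiv (Sum.inr a)) := hX _
    simpa using add_nonneg h1 h2
  refine ⟨halpha X1 hX1, halpha X2 hX2, ?_, ?_, ?_⟩
  · apply Finset.sum_nonneg
    intro k _
    apply mul_nonneg (hX1 _)
    rw [mulVec, dotProduct]
    exact Finset.sum_nonneg fun j _ => mul_nonneg (hAinvnn k j) (hX2 _)
  · have hNpd : (fromBlocks H11 H12 H12ᵀ H22).PosDef := by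
      have h := hHpd
      rw [hH] at h
      have h2 := posDef_submatrix h finSumFinEquiv
      simpa [reindex_apply, Matrix.submatrix_submatrix] using h2
    have hSpd := schur_posDef hH11pd hNpd
    have hq := blockQuad H11 H12 H22 hH11symm hH11pd hSpd
      (fun k => X1 (finSumFinEquiv (Sum.inl k))) (fun k => X2 (finSumFinEquiv (Sum.inl k)))
      (fun a => X1 (finSumFinEquiv (Sum.inr a))) (fun a => X2 (finSumFinEquiv (Sum.inr a)))
    have hcomp : ∀ X : Fin (n+2) → ℝ, X ∘ finSumFinEquiv =
        Sum.elim (fun k => X (finSumFinEquiv (Sum.inl k))) (fun a => X (finSumFinEquiv (Sum.inr a))) := by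
      intro X; funext i; cases i <;> rfl
    have hmain : X1 ⬝ᵥ (H⁻¹ *ᵥ X2) =
        Sum.elim (fun k => X1 (finSumFinEquiv (Sum.inl k))) (fun a => X1 (finSumFinEquiv (Sum.inr a))) ⬝ᵥ
          ((fromBlocks H11 H12 H12ᵀ H22)⁻¹ *ᵥ Sum.elim (fun k => X2 (finSumFinEquiv (Sum.inl k))) (fun a => X2 (finSumFinEquiv (Sum.inr a)))) := by
      rw [hH, inv_reindex, reindex_apply, submatrix_mulVec_equiv]
      rw [Equiv.symm_symm, dotProduct_comp_equiv_symm, hcomp X1, hcomp X2]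
    have hG22 : (fun a b => H⁻¹ (finSumFinEquiv (Sum.inr a)) (finSumFinEquiv (Sum.inr b)))
        = (H22 - H12ᵀ * H11⁻¹ * H12)⁻¹ := by
      funext a b
      rw [hH, inv_reindex, reindex_apply]
      simp only [submatrix_apply, Equiv.symm_apply_apply]
      rw [blockInv H11 H12 H22 hH11pd hSpd]
      rfl
    rw [hmain, hq, hG22]
  · set Bb : Matrix (Fin n) (Fin 1) ℝ := Matrix.of fun i (_ : Fin 1) => H12 i 0 + H12 i 1 with hBb
    set Db : Matrix (Fin 1) (Fin 1) ℝ := Matrix.of fun _ _ => H22bar with hDb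
    have hHbar2 : Hbar = Matrix.reindex finSumFinEquiv finSumFinEquiv (fromBlocks H11 Bb Bbᵀ Db) := by
      rw [hHbar]
      rfl
    have hNpd : (fromBlocks H11 Bb Bbᵀ Db).PosDef := by
      have h := hHbarpd
      rw [hHbar2] at h
      have h2 := posDef_submatrix h finSumFinEquiv
      simpa [reindex_apply, Matrix.submatrix_submatrix] using h2
    have hSpd := schur_posDef hH11pd hNpd
    have hq := blockQuad H11 Bb Db hH11symm hH11pd hSpd
      (fun k => X1 (finSumFinEquiv (Sum.inl k))) (fun k => X2 (finSumFinEquiv (Sum.inl k)))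
      (fun _ => X1 (finSumFinEquiv (Sum.inr (0:Fin 2))) + X1 (finSumFinEquiv (Sum.inr (1:Fin 2))))
      (fun _ => X2 (finSumFinEquiv (Sum.inr (0:Fin 2))) + X2 (finSumFinEquiv (Sum.inr (1:Fin 2))))
    have hbv : ∀ X : Fin (n+2) → ℝ,
        ((fun i : Fin (n+1) => if hi : (i:ℕ) < n then X ⟨i, by omega⟩
            else X ⟨n, by omega⟩ + X ⟨n+1, by omega⟩) ∘ finSumFinEquiv)
          = Sum.elim (fun k => X (finSumFinEquiv (Sum.inl k)))
              (fun _ : Fin 1 => X (finSumFinEquiv (Sum.inr (0:Fin 2)))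
                + X (finSumFinEquiv (Sum.inr (1:Fin 2)))) := by
      intro X; funext i
      cases i with
      | inl k =>
        simp only [Function.comp_apply, finSumFinEquiv_apply_left, Sum.elim_inl]
        simp only [Fin.coe_castAdd, k.isLt, ↓reduceDIte]
        exact congrArg X (Fin.ext (by simp))
      | inr a =>
        simp only [Function.comp_apply, finSumFinEquiv_apply_right, Sum.elim_inr]
        simp only [Fin.coe_natAdd, show ¬ (n + (a:ℕ) < n) by omega, ↓reduceDIte]
        exact congrArg₂ (· + ·) (congrArg X (Fin.ext (by simp)))
          (congrArg X (Fin.ext (by simp)))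
    have hmain : (fun i : Fin (n+1) => if hi : (i:ℕ) < n then X1 ⟨i, by omega⟩
          else X1 ⟨n, by omega⟩ + X1 ⟨n+1, by omega⟩) ⬝ᵥ
        (Hbar⁻¹ *ᵥ (fun i : Fin (n+1) => if hi : (i:ℕ) < n then X2 ⟨i, by omega⟩
          else X2 ⟨n, by omega⟩ + X2 ⟨n+1, by omega⟩))
        = Sum.elim (fun k => X1 (finSumFinEquiv (Sum.inl k)))
            (fun _ : Fin 1 => X1 (finSumFinEquiv (Sum.inr (0:Fin 2)))
              + X1 (finSumFinEquiv (Sum.inr (1:Fin 2)))) ⬝ᵥ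
          ((fromBlocks H11 Bb Bbᵀ Db)⁻¹ *ᵥ
            Sum.elim (fun k => X2 (finSumFinEquiv (Sum.inl k)))
              (fun _ : Fin 1 => X2 (finSumFinEquiv (Sum.inr (0:Fin 2)))
                + X2 (finSumFinEquiv (Sum.inr (1:Fin 2))))) := by
      rw [hHbar2, inv_reindex, reindex_apply, submatrix_mulVec_equiv]
      rw [Equiv.symm_symm, dotProduct_comp_equiv_symm, hbv X1, hbv X2]
    have hGbar22 : Hbar⁻¹ (Fin.last n) (Fin.last n) = (Db - Bbᵀ * H11⁻¹ * Bb)⁻¹ 0 0 := by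
      rw [hHbar2, inv_reindex, reindex_apply]
      have hlast : (finSumFinEquiv.symm (Fin.last n)) = Sum.inr (0 : Fin 1) := by
        rw [Equiv.symm_apply_eq]
        apply Fin.ext
        simp [finSumFinEquiv_apply_right]
      simp only [submatrix_apply, hlast]
      rw [blockInv H11 Bb Db hH11pd hSpd]
      rfl
    have hsum : ∀ X : Fin (n+2) → ℝ,
        ((-(Bbᵀ * H11⁻¹)) *ᵥ (fun k => X (finSumFinEquiv (Sum.inl k)))) (0 : Fin 1)
          = ((-(H12ᵀ * H11⁻¹)) *ᵥ (fun k => X (finSumFinEquiv (Sum.inl k)))) 0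
            + ((-(H12ᵀ * H11⁻¹)) *ᵥ (fun k => X (finSumFinEquiv (Sum.inl k)))) 1 := by
      intro X
      simp only [mulVec, dotProduct, Matrix.neg_apply, mul_apply, hBb,
        transpose_apply, Matrix.of_apply, Finset.sum_add_distrib, add_mul, neg_add]
    have h1 : Sum.elim (fun k => X1 (finSumFinEquiv (Sum.inl k)))
            (fun _ : Fin 1 => X1 (finSumFinEquiv (Sum.inr (0:Fin 2)))
              + X1 (finSumFinEquiv (Sum.inr (1:Fin 2)))) ⬝ᵥ
          ((fromBlocks H11 Bb Bbᵀ Db)⁻¹ *ᵥ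
            Sum.elim (fun k => X2 (finSumFinEquiv (Sum.inl k)))
              (fun _ : Fin 1 => X2 (finSumFinEquiv (Sum.inr (0:Fin 2)))
                + X2 (finSumFinEquiv (Sum.inr (1:Fin 2)))))
        = (fun k => X1 (finSumFinEquiv (Sum.inl k))) ⬝ᵥ (H11⁻¹ *ᵥ (fun k => X2 (finSumFinEquiv (Sum.inl k))))
          + (((-(Bbᵀ * H11⁻¹)) *ᵥ (fun k => X1 (finSumFinEquiv (Sum.inl k)))) 0
              + (X1 (finSumFinEquiv (Sum.inr (0:Fin 2))) + X1 (finSumFinEquiv (Sum.inr (1:Fin 2)))))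
            * ((Db - Bbᵀ * H11⁻¹ * Bb)⁻¹ 0 0 *
              (((-(Bbᵀ * H11⁻¹)) *ᵥ (fun k => X2 (finSumFinEquiv (Sum.inl k)))) 0
                + (X2 (finSumFinEquiv (Sum.inr (0:Fin 2))) + X2 (finSumFinEquiv (Sum.inr (1:Fin 2))))))
        := by
      rw [hq]
      congr 1
      simp [dotProduct, mulVec, Fin.sum_univ_one]
    rw [hmain, h1, hsum X1, hsum X2, hGbar22]
    simp only [Pi.add_apply]
    ring
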